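/- Under the same setup (contractive Gleason solution A on H(K_S), C = evaluation at 0), the kernel functions satisfy K_S(·,ζ)y = (I - A*Z(ζ)*)⁻¹C*y for every ζ ∈ 𝔹ᵈ and y ∈ Y; consequently K_S(λ,ζ) = C(I - Z(λ)A)⁻¹(I - A*Z(ζ)*)⁻¹C* for all λ, ζ ∈ 𝔹ᵈ. -/

import Mathlib

open ContinuousLinearMap

/-- An (abstract) realization of the reproducing kernel Hilbert space of an
`L(V)`-valued positive kernel `k` on `Ω`. -/
structure RKHS' (Ω : Type*) (V : Type*) [NormedAddCommGroup V] [InnerProductSpace ℂ V]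
    (k : Ω → Ω → V →L[ℂ] V)
    (H : Type*) [NormedAddCommGroup H] [InnerProductSpace ℂ H] where
  toFun : H →ₗ[ℂ] (Ω → V)
  kElem : Ω → V → H
  kElem_apply : ∀ (ζ : Ω) (v : V) (l : Ω), toFun (kElem ζ v) l = k l ζ v
  reproducing : ∀ (f : H) (ζ : Ω) (v : V),
    (inner ℂ (kElem ζ v) f : ℂ) = inner ℂ v (toFun f ζ)
  dense_span :
    (Submodule.span ℂ (Set.range fun p : Ω × V => kElem p.1 p.2)).topologicalClosure = ⊤

/-- If `S` is in the Schur class (its kernel `K_S(λ,ζ) = (I - S(λ)S(ζ)*)/(1-⟨λ,ζ⟩)`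
is positive, with RKHS `H(K_S)`), `A₁,…,A_d` is a contractive solution of the
Gleason problem for `H(K_S)` and `C` is evaluation at `0`, then the kernel
elements satisfy `K_S(·,ζ)y = (I - A*Z(ζ)*)⁻¹ C* y`, and consequently
`K_S(λ,ζ) = C (I - Z(λ)A)⁻¹ (I - A*Z(ζ)*)⁻¹ C*`. -/
theorem stmt14 {d : ℕ}
    {U Y : Type*}
    [NormedAddCommGroup U] [InnerProductSpace ℂ U] [CompleteSpace U]
    [NormedAddCommGroup Y] [InnerProductSpace ℂ Y] [CompleteSpace Y]
    (S : {l : EuclideanSpace ℂ (Fin d) // ‖l‖ < 1} → U →L[ℂ] Y)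
    (K : {l : EuclideanSpace ℂ (Fin d) // ‖l‖ < 1} →
         {l : EuclideanSpace ℂ (Fin d) // ‖l‖ < 1} → Y →L[ℂ] Y)
    (hK : ∀ l z, (1 - ∑ j, l.1 j * (starRingEnd ℂ) (z.1 j)) • K l z =
      1 - S l ∘L adjoint (S z))
    (hKpos : ∀ (n : ℕ) (ζ : Fin n → {l : EuclideanSpace ℂ (Fin d) // ‖l‖ < 1})
      (y : Fin n → Y),
      0 ≤ (∑ i, ∑ j, (inner ℂ (K (ζ i) (ζ j) (y j)) (y i) : ℂ)).re ∧
      (∑ i, ∑ j, (inner ℂ (K (ζ i) (ζ j) (y j)) (y i) : ℂ)).im = 0)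
    {H : Type*} [NormedAddCommGroup H] [InnerProductSpace ℂ H] [CompleteSpace H]
    (r : RKHS' {l : EuclideanSpace ℂ (Fin d) // ‖l‖ < 1} Y K H)
    (A : Fin d → H →L[ℂ] H)
    (hGleason : ∀ (f : H) (l : {l : EuclideanSpace ℂ (Fin d) // ‖l‖ < 1}),
      r.toFun f l - r.toFun f ⟨0, by simp⟩ = ∑ j, l.1 j • r.toFun (A j f) l)
    (hContr : ∀ f : H,
      ∑ j, ‖A j f‖ ^ 2 ≤ ‖f‖ ^ 2 - ‖r.toFun f ⟨0, by simp⟩‖ ^ 2)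
    (Cop : H →L[ℂ] Y)
    (hC : ∀ f : H, Cop f = r.toFun f ⟨0, by simp⟩) :
    (∀ (z : {l : EuclideanSpace ℂ (Fin d) // ‖l‖ < 1}) (y : Y),
      r.kElem z y =
        Ring.inverse (1 - ∑ j, (starRingEnd ℂ) (z.1 j) • adjoint (A j))
          (adjoint Cop y)) ∧
    (∀ l z : {l : EuclideanSpace ℂ (Fin d) // ‖l‖ < 1},
      K l z =
        Cop ∘L Ring.inverse (1 - ∑ j, l.1 j • A j) ∘L
          Ring.inverse (1 - ∑ j, (starRingEnd ℂ) (z.1 j) • adjoint (A j)) ∘L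
          adjoint Cop) := by
  
  classical
  -- the operator 1 - Z(l)A is invertible
  have hUnit : ∀ l : {l : EuclideanSpace ℂ (Fin d) // ‖l‖ < 1},
      IsUnit ((1 : H →L[ℂ] H) - ∑ j, l.1 j • A j) := by
    intro l
    have hTle : ∀ f : H, ‖(∑ j, l.1 j • A j) f‖ ≤ ‖l.1‖ * ‖f‖ := by
      intro f
      have h1 : ‖(∑ j, l.1 j • A j) f‖ ≤ ∑ j, ‖l.1 j‖ * ‖A j f‖ := by
        rw [ContinuousLinearMap.sum_apply]
        refine (norm_sum_le _ _).trans ?_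
        refine Finset.sum_le_sum fun j _ => ?_
        rw [ContinuousLinearMap.smul_apply, norm_smul]
      have hl : ∑ j, ‖l.1 j‖ ^ 2 = ‖l.1‖ ^ 2 := by
        rw [EuclideanSpace.norm_eq, Real.sq_sqrt (by positivity)]
      have hcs := Finset.sum_mul_sq_le_sq_mul_sq Finset.univ (fun j => ‖l.1 j‖) (fun j => ‖A j f‖)
      have hA : ∑ j, ‖A j f‖ ^ 2 ≤ ‖f‖ ^ 2 := by
        have := hContr f
        nlinarith [sq_nonneg ‖r.toFun f ⟨0, by simp⟩‖]
      have h0 : (0:ℝ) ≤ ∑ j, ‖l.1 j‖ * ‖A j f‖ :=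
        Finset.sum_nonneg fun j _ => mul_nonneg (norm_nonneg _) (norm_nonneg _)
      nlinarith [norm_nonneg l.1, norm_nonneg f, norm_nonneg ((∑ j, l.1 j • A j) f),
        mul_nonneg (norm_nonneg l.1) (norm_nonneg f)]
    have hnorm : ‖∑ j, l.1 j • A j‖ < 1 :=
      lt_of_le_of_lt (ContinuousLinearMap.opNorm_le_bound _ (norm_nonneg _) hTle) l.2
    exact isUnit_one_sub_of_norm_lt_one hnorm
  -- evaluation through the resolvent
  have hEval : ∀ (f : H) (l : {l : EuclideanSpace ℂ (Fin d) // ‖l‖ < 1}),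
      r.toFun f l = Cop (Ring.inverse ((1 : H →L[ℂ] H) - ∑ j, l.1 j • A j) f) := by
    intro f l
    set B : H →L[ℂ] H := (1 : H →L[ℂ] H) - ∑ j, l.1 j • A j with hB
    set g : H := Ring.inverse B f with hg
    have hBg : B g = f := by
      have h := Ring.mul_inverse_cancel B (hUnit l)
      have : (B * Ring.inverse B) f = (1 : H →L[ℂ] H) f := by rw [h]
      simpa [ContinuousLinearMap.mul_apply] using this
    have hsplit : f = g - ∑ j, l.1 j • A j g := by
      rw [← hBg, hB]
      simp [ContinuousLinearMap.sub_apply, ContinuousLinearMap.sum_apply]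
    calc r.toFun f l = r.toFun (g - ∑ j, l.1 j • A j g) l := by rw [← hsplit]
      _ = r.toFun g l - ∑ j, l.1 j • r.toFun (A j g) l := by
          rw [map_sub, map_sum]
          simp only [Pi.sub_apply, Finset.sum_apply]
          congr 1
          exact Finset.sum_congr rfl fun j _ => by rw [map_smul]; rfl
      _ = r.toFun g ⟨0, by simp⟩ := by rw [← hGleason g l]; abel
      _ = Cop g := (hC g).symm
  -- identify the adjoint operator
  have hAdj : ∀ z : {l : EuclideanSpace ℂ (Fin d) // ‖l‖ < 1},
      ((1 : H →L[ℂ] H) - ∑ j, (starRingEnd ℂ) (z.1 j) • adjoint (A j)) =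
        star ((1 : H →L[ℂ] H) - ∑ j, z.1 j • A j) := by
    intro z
    rw [star_sub, star_one, star_sum]
    congr 1
    refine Finset.sum_congr rfl fun j _ => ?_
    rw [star_smul, star_eq_adjoint]
    rfl
  have key : ∀ (z : {l : EuclideanSpace ℂ (Fin d) // ‖l‖ < 1}) (y : Y),
      r.kElem z y =
        Ring.inverse ((1 : H →L[ℂ] H) - ∑ j, (starRingEnd ℂ) (z.1 j) • adjoint (A j))
          (adjoint Cop y) := by
    intro z y
    have hrw : Ring.inverse ((1 : H →L[ℂ] H) - ∑ j, (starRingEnd ℂ) (z.1 j) • adjoint (A j)) =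
        adjoint (Ring.inverse ((1 : H →L[ℂ] H) - ∑ j, z.1 j • A j)) := by
      rw [hAdj z, Ring.inverse_star, star_eq_adjoint]
    rw [hrw]
    refine ext_inner_right ℂ fun f => ?_
    rw [r.reproducing f z y, adjoint_inner_left, adjoint_inner_left, hEval f z]
  refine ⟨key, fun l z => ?_⟩
  ext v
  rw [← r.kElem_apply z v l, hEval (r.kElem z v) l, key z v]
  rfl
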